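/- The clairvoyant baseline shift matrix Δ_i = 𝐂_{T+1}^{[1:T+1, 1:T+1]} − blkdiag(𝐂_T^{[1:T, 1:T]}, 0_{n×n}) is positive semidefinite, i.e., blkdiag(𝐂_T^{[1:T, 1:T]}, 0_{n×n}) ⪯ 𝐂_{T+1}^{[1:T+1, 1:T+1]}. (Claim established in the proof of Proposition 2.) -/

import Mathlib

open Matrix

noncomputable section

/-- Index type for stacked state / disturbance trajectories over horizon `T`:
block index in `Fin (T+1)`, coordinate in `Fin n`. -/
abbrev SIdx (n T : ℕ) := Fin (T + 1) × Fin n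

/-- Index type for stacked input trajectories over horizon `T`. -/
abbrev UIdx (m T : ℕ) := Fin T × Fin m

/-- The block-downshift operator `𝐙`. -/
def Zshift (n T : ℕ) : Matrix (SIdx n T) (SIdx n T) ℝ :=
  Matrix.of fun p q => if (p.1 : ℕ) = (q.1 : ℕ) + 1 ∧ p.2 = q.2 then (1 : ℝ) else 0

/-- `𝐀 = I_{T+1} ⊗ A`. -/
def bigA (n T : ℕ) (A : Matrix (Fin n) (Fin n) ℝ) : Matrix (SIdx n T) (SIdx n T) ℝ :=
  Matrix.of fun p q => if p.1 = q.1 then A p.2 q.2 else 0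

/-- `𝐁 = col(I_T ⊗ B, 0)`. -/
def bigB (n m T : ℕ) (B : Matrix (Fin n) (Fin m) ℝ) : Matrix (SIdx n T) (UIdx m T) ℝ :=
  Matrix.of fun p q => if (p.1 : ℕ) = (q.1 : ℕ) then B p.2 q.2 else 0

/-- `𝐐 = blkdiag(I_T ⊗ Q, 0)`. -/
def bigQ (n T : ℕ) (Q : Matrix (Fin n) (Fin n) ℝ) : Matrix (SIdx n T) (SIdx n T) ℝ :=
  Matrix.of fun p q => if p.1 = q.1 ∧ (p.1 : ℕ) < T then Q p.2 q.2 else 0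

/-- `𝐑 = I_T ⊗ R`. -/
def bigR (m T : ℕ) (R : Matrix (Fin m) (Fin m) ℝ) : Matrix (UIdx m T) (UIdx m T) ℝ :=
  Matrix.of fun p q => if p.1 = q.1 then R p.2 q.2 else 0

/-- `𝐅 = (I − 𝐙𝐀)⁻¹𝐙𝐁`. -/
def bigF (n m T : ℕ) (A : Matrix (Fin n) (Fin n) ℝ) (B : Matrix (Fin n) (Fin m) ℝ) :
    Matrix (SIdx n T) (UIdx m T) ℝ :=
  (1 - Zshift n T * bigA n T A)⁻¹ * (Zshift n T * bigB n m T B)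

/-- `𝐆 = (I − 𝐙𝐀)⁻¹`. -/
def bigG (n T : ℕ) (A : Matrix (Fin n) (Fin n) ℝ) : Matrix (SIdx n T) (SIdx n T) ℝ :=
  (1 - Zshift n T * bigA n T A)⁻¹

/-- The control cost `J_T(u, δ) = xᵀ𝐐x + uᵀ𝐑u` with `x = 𝐅u + 𝐆δ`. -/
def costJ (n m T : ℕ) (A : Matrix (Fin n) (Fin n) ℝ) (B : Matrix (Fin n) (Fin m) ℝ)
    (Q : Matrix (Fin n) (Fin n) ℝ) (R : Matrix (Fin m) (Fin m) ℝ)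
    (u : UIdx m T → ℝ) (δ : SIdx n T → ℝ) : ℝ :=
  let x := bigF n m T A B *ᵥ u + bigG n T A *ᵥ δ
  x ⬝ᵥ (bigQ n T Q *ᵥ x) + u ⬝ᵥ (bigR m T R *ᵥ u)

/-- `𝐏 = 𝐑 + 𝐅ᵀ𝐐𝐅`. -/
def bigP (n m T : ℕ) (A : Matrix (Fin n) (Fin n) ℝ) (B : Matrix (Fin n) (Fin m) ℝ)
    (Q : Matrix (Fin n) (Fin n) ℝ) (R : Matrix (Fin m) (Fin m) ℝ) :
    Matrix (UIdx m T) (UIdx m T) ℝ :=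
  bigR m T R + (bigF n m T A B)ᵀ * bigQ n T Q * bigF n m T A B

/-- The clairvoyant cost matrix `𝐂_T = 𝐆ᵀ𝐐(I + 𝐅𝐑⁻¹𝐅ᵀ𝐐)⁻¹𝐆`. -/
def Cmat (n m T : ℕ) (A : Matrix (Fin n) (Fin n) ℝ) (B : Matrix (Fin n) (Fin m) ℝ)
    (Q : Matrix (Fin n) (Fin n) ℝ) (R : Matrix (Fin m) (Fin m) ℝ) :
    Matrix (SIdx n T) (SIdx n T) ℝ :=
  (bigG n T A)ᵀ * bigQ n T Q *
    (1 + bigF n m T A B * (bigR m T R)⁻¹ * (bigF n m T A B)ᵀ * bigQ n T Q)⁻¹ * bigG n T A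

/-- Assemble `δ = col(x₀, w₀, …, w_{T−1})`. -/
def assemble (n T : ℕ) (x0 : Fin n → ℝ) (w : Fin T × Fin n → ℝ) : SIdx n T → ℝ :=
  fun p => if h : (p.1 : ℕ) = 0 then x0 p.2
    else w (⟨(p.1 : ℕ) - 1, by have := p.1.isLt; omega⟩, p.2)

open Matrix Finset

variable {n m L : ℕ} (A : Matrix (Fin n) (Fin n) ℝ) (B : Matrix (Fin n) (Fin m) ℝ)

lemma ZA_apply (p q : SIdx n L) :
    (Zshift n L * bigA n L A) p q = if (p.1 : ℕ) = (q.1 : ℕ) + 1 then A p.2 q.2 else 0 := by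
  rw [mul_apply, Fintype.sum_prod_type]
  simp only [Zshift, bigA, of_apply, ite_mul, one_mul, zero_mul]
  rw [Finset.sum_comm]
  rw [Finset.sum_eq_single p.2]
  · rw [Finset.sum_eq_single q.1]
    · simp [eq_comm]
    · intro b _ hb
      simp [Ne.symm hb, fun h : (p.1:ℕ) = (b:ℕ)+1 => hb]
      intro h1 h2; exact absurd (Fin.ext (by omega)) hb
    · simp
  · intro b _ hb; simp [Ne.symm hb]
  · simp

lemma ZB_apply (p : SIdx n L) (q : UIdx m L) :
    (Zshift n L * bigB n m L B) p q = if (p.1 : ℕ) = (q.1 : ℕ) + 1 then B p.2 q.2 else 0 := by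
  rw [mul_apply, Fintype.sum_prod_type]
  simp only [Zshift, bigB, of_apply, ite_mul, one_mul, zero_mul]
  rw [Finset.sum_comm]
  rw [Finset.sum_eq_single p.2]
  · rw [Finset.sum_eq_single ⟨(q.1 : ℕ), by omega⟩]
    · simp
    · intro b _ hb
      have : ¬ ((b : ℕ) = (q.1 : ℕ)) := fun h => hb (Fin.ext (by simpa using h))
      simp [this]
    · simp
  · intro b _ hb; simp [Ne.symm hb]
  · simp

lemma ZA_pow_apply : ∀ (k : ℕ) (p q : SIdx n L), (p.1 : ℕ) ≠ (q.1 : ℕ) + k →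
    ((Zshift n L * bigA n L A) ^ k) p q = 0 := by
  intro k
  induction k with
  | zero => intro p q h; rw [pow_zero]; exact one_apply_ne (fun hpq => h (by rw [hpq]; ring))
  | succ k ih =>
    intro p q h
    rw [pow_succ, mul_apply]
    apply Finset.sum_eq_zero
    intro r _
    rcases eq_or_ne ((r.1 : ℕ)) ((q.1 : ℕ) + 1) with hr | hr
    · rw [ih p r (by omega), zero_mul]
    · rw [ZA_apply, if_neg hr, mul_zero]

lemma isUnit_one_sub_ZA : IsUnit (1 - Zshift n L * bigA n L A) := by
  apply IsNilpotent.isUnit_one_sub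
  refine ⟨L + 2, ?_⟩
  ext p q
  rw [ZA_pow_apply A (L+2) p q (by have := p.1.isLt; omega)]
  simp

lemma isUnit_det_one_sub_ZA : IsUnit (1 - Zshift n L * bigA n L A).det :=
  (Matrix.isUnit_iff_isUnit_det _).mp (isUnit_one_sub_ZA A)

/-- The state trajectory. -/
def xvec (n m L : ℕ) (A : Matrix (Fin n) (Fin n) ℝ) (B : Matrix (Fin n) (Fin m) ℝ)
    (u : UIdx m L → ℝ) (δ : SIdx n L → ℝ) : SIdx n L → ℝ :=
  bigF n m L A B *ᵥ u + bigG n L A *ᵥ δ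

lemma costJ_eq (Q : Matrix (Fin n) (Fin n) ℝ) (R : Matrix (Fin m) (Fin m) ℝ)
    (u : UIdx m L → ℝ) (δ : SIdx n L → ℝ) :
    costJ n m L A B Q R u δ =
      xvec n m L A B u δ ⬝ᵥ (bigQ n L Q *ᵥ xvec n m L A B u δ) + u ⬝ᵥ (bigR m L R *ᵥ u) := rfl

lemma state_rec (u : UIdx m L → ℝ) (δ : SIdx n L → ℝ) :
    xvec n m L A B u δ = (Zshift n L * bigA n L A) *ᵥ xvec n m L A B u δ +
      ((Zshift n L * bigB n m L B) *ᵥ u + δ) := by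
  have hdet := isUnit_det_one_sub_ZA (n := n) (L := L) A
  have h1 : (1 - Zshift n L * bigA n L A) *ᵥ xvec n m L A B u δ =
      (Zshift n L * bigB n m L B) *ᵥ u + δ := by
    unfold xvec bigF bigG
    rw [mulVec_add, mulVec_mulVec, mulVec_mulVec, ← Matrix.mul_assoc,
      Matrix.mul_nonsing_inv _ hdet, Matrix.one_mul, Matrix.one_mulVec]
  have := congrArg (fun v => (Zshift n L * bigA n L A) *ᵥ xvec n m L A B u δ + v) h1
  simpa [Matrix.sub_mulVec, Matrix.one_mulVec] using this

lemma xvec_zero (u : UIdx m L → ℝ) (δ : SIdx n L → ℝ) (k : Fin (L+1)) (hk : (k : ℕ) = 0)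
    (i : Fin n) : xvec n m L A B u δ (k, i) = δ (k, i) := by
  conv_lhs => rw [state_rec A B u δ]
  have h1 : ((Zshift n L * bigA n L A) *ᵥ xvec n m L A B u δ) (k, i) = 0 := by
    simp only [mulVec, dotProduct]
    apply Finset.sum_eq_zero
    intro r _
    rw [ZA_apply, if_neg (show ¬((k:ℕ) = ((r.1 : Fin (L+1)):ℕ)+1) by omega), zero_mul]
  have h2 : ((Zshift n L * bigB n m L B) *ᵥ u) (k, i) = 0 := by
    simp only [mulVec, dotProduct]
    apply Finset.sum_eq_zero
    intro r _
    rw [ZB_apply, if_neg (show ¬((k:ℕ) = ((r.1 : Fin L):ℕ)+1) by omega), zero_mul]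
  simp [h1, h2]

lemma xvec_succ (u : UIdx m L → ℝ) (δ : SIdx n L → ℝ) (k : Fin L) (i : Fin n) :
    xvec n m L A B u δ (k.succ, i) =
      (∑ j, A i j * xvec n m L A B u δ (k.castSucc, j)) +
      (∑ j, B i j * u (k, j)) + δ (k.succ, i) := by
  conv_lhs => rw [state_rec A B u δ]
  have h1 : ((Zshift n L * bigA n L A) *ᵥ xvec n m L A B u δ) (k.succ, i) =
      ∑ j, A i j * xvec n m L A B u δ (k.castSucc, j) := by
    simp only [mulVec, dotProduct]
    rw [Fintype.sum_prod_type]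
    rw [Finset.sum_eq_single k.castSucc]
    · apply Finset.sum_congr rfl
      intro j _
      rw [ZA_apply, if_pos (by simp)]
    · intro b _ hb
      apply Finset.sum_eq_zero
      intro j _
      rw [ZA_apply, if_neg (fun h => hb (Fin.ext (by simp at h ⊢; omega))), zero_mul]
    · simp
  have h2 : ((Zshift n L * bigB n m L B) *ᵥ u) (k.succ, i) = ∑ j, B i j * u (k, j) := by
    simp only [mulVec, dotProduct]
    rw [Fintype.sum_prod_type]
    rw [Finset.sum_eq_single k]
    · apply Finset.sum_congr rfl
      intro j _
      rw [ZB_apply, if_pos (by simp)]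
    · intro b _ hb
      apply Finset.sum_eq_zero
      intro j _
      rw [ZB_apply, if_neg (fun h => hb (Fin.ext (by simp at h ⊢; omega))), zero_mul]
    · simp
  simp only [Pi.add_apply, h1, h2]
  ring

lemma xvec_agree {T : ℕ} (u' : UIdx m (T+1) → ℝ) (δ' : SIdx n (T+1) → ℝ) (δ : SIdx n T → ℝ)
    (hδ : ∀ p : SIdx n T, δ p = δ' (p.1.castSucc, p.2)) :
    ∀ (k : Fin (T+1)) (i : Fin n),
      xvec n m T A B (fun q => u' (q.1.castSucc, q.2)) δ (k, i) =
      xvec n m (T+1) A B u' δ' (k.castSucc, i) := by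
  set u : UIdx m T → ℝ := fun q => u' (q.1.castSucc, q.2) with hu
  intro k
  induction k using Fin.induction with
  | zero =>
    intro i
    rw [xvec_zero A B u δ 0 rfl, xvec_zero A B u' δ' _ rfl, hδ]
  | succ k ih =>
    intro i
    have h2 : (k.succ.castSucc : Fin (T+2)) = (k.castSucc).succ := by ext; simp
    rw [xvec_succ A B u δ k i, h2, xvec_succ A B u' δ' k.castSucc i]
    congr 1
    · congr 1
      exact Finset.sum_congr rfl (fun j _ => by rw [ih j])
    · rw [hδ (k.succ, i), h2]

lemma qform_bigQ (Q : Matrix (Fin n) (Fin n) ℝ) (x : SIdx n L → ℝ) :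
    x ⬝ᵥ (bigQ n L Q *ᵥ x) =
      ∑ k : Fin L, (fun i => x (k.castSucc, i)) ⬝ᵥ (Q *ᵥ fun i => x (k.castSucc, i)) := by
  simp only [dotProduct, mulVec, bigQ, of_apply]
  rw [Fintype.sum_prod_type, Fin.sum_univ_castSucc]
  have hlast : ∀ i : Fin n, (x ((Fin.last L), i) *
      ∑ q : SIdx n L, (if (Fin.last L) = q.1 ∧ ((Fin.last L : Fin (L+1)) : ℕ) < L then Q i q.2 else 0) * x q) = 0 := by
    intro i
    simp [Fin.last]
  rw [Finset.sum_congr rfl (fun i _ => hlast i), Finset.sum_const, smul_zero, add_zero]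
  apply Finset.sum_congr rfl
  intro k _
  apply Finset.sum_congr rfl
  intro i _
  congr 1
  rw [Fintype.sum_prod_type, Finset.sum_eq_single k.castSucc]
  · apply Finset.sum_congr rfl
    intro j _
    rw [if_pos ⟨rfl, by simp⟩]
  · intro b _ hb
    apply Finset.sum_eq_zero
    intro j _
    rw [if_neg (fun h => hb h.1.symm), zero_mul]
  · simp

lemma qform_bigR (R : Matrix (Fin m) (Fin m) ℝ) (u : UIdx m L → ℝ) :
    u ⬝ᵥ (bigR m L R *ᵥ u) =
      ∑ k : Fin L, (fun i => u (k, i)) ⬝ᵥ (R *ᵥ fun i => u (k, i)) := by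
  simp only [dotProduct, mulVec, bigR, of_apply]
  rw [Fintype.sum_prod_type]
  apply Finset.sum_congr rfl
  intro k _
  apply Finset.sum_congr rfl
  intro i _
  congr 1
  rw [Fintype.sum_prod_type, Finset.sum_eq_single k]
  · apply Finset.sum_congr rfl
    intro j _
    rw [if_pos rfl]
  · intro b _ hb
    apply Finset.sum_eq_zero
    intro j _
    rw [if_neg (fun h => hb h.symm), zero_mul]
  · simp

lemma bigQ_posSemidef (Q : Matrix (Fin n) (Fin n) ℝ) (hQ : Q.PosSemidef) :
    (bigQ n L Q).PosSemidef := by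
  refine posSemidef_iff_dotProduct_mulVec.mpr ⟨?_, ?_⟩
  · show (bigQ n L Q)ᴴ = bigQ n L Q
    ext p q
    obtain ⟨p1, p2⟩ := p
    obtain ⟨q1, q2⟩ := q
    simp only [conjTranspose_apply, bigQ, of_apply, star_trivial]
    have hsym := congrFun (congrFun hQ.isHermitian (q1, q2).2) (p1, p2).2
    simp only [conjTranspose_apply, star_trivial] at hsym
    by_cases h : p1 = q1
    · subst h; simp [hsym]
    · rw [if_neg (fun hc => h hc.1.symm), if_neg (fun hc => h hc.1)]
  · intro x
    rw [star_trivial, qform_bigQ]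
    exact Finset.sum_nonneg fun k _ => by simpa using hQ.dotProduct_mulVec_nonneg (fun i => x (k.castSucc, i))

lemma bigR_posDef (R : Matrix (Fin m) (Fin m) ℝ) (hR : R.PosDef) :
    (bigR m L R).PosDef := by
  refine posDef_iff_dotProduct_mulVec.mpr ⟨?_, ?_⟩
  · show (bigR m L R)ᴴ = bigR m L R
    ext p q
    obtain ⟨p1, p2⟩ := p
    obtain ⟨q1, q2⟩ := q
    simp only [conjTranspose_apply, bigR, of_apply, star_trivial]
    have hsym := congrFun (congrFun hR.isHermitian (q1, q2).2) (p1, p2).2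
    simp only [conjTranspose_apply, star_trivial] at hsym
    by_cases h : p1 = q1
    · subst h; simp [hsym]
    · rw [if_neg (fun hc => h hc.symm), if_neg (fun hc => h hc)]
  · intro x hx
    rw [star_trivial, qform_bigR]
    obtain ⟨p, hp⟩ : ∃ p, x p ≠ 0 := by
      by_contra hc
      push_neg at hc
      exact hx (funext hc)
    apply Finset.sum_pos'
    · intro k _
      simpa using hR.posSemidef.dotProduct_mulVec_nonneg (fun i => x (k, i))
    · refine ⟨p.1, Finset.mem_univ _, ?_⟩
      simpa using hR.dotProduct_mulVec_pos (x := fun i => x (p.1, i))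
        (fun hc => hp (congrFun hc p.2))

set_option maxHeartbeats 2000000 in
lemma cost_le_cost {T : ℕ} (Q : Matrix (Fin n) (Fin n) ℝ) (R : Matrix (Fin m) (Fin m) ℝ)
    (hQ : Q.PosSemidef) (hR : R.PosDef)
    (u' : UIdx m (T+1) → ℝ) (δ' : SIdx n (T+1) → ℝ) (δ : SIdx n T → ℝ)
    (hδ : ∀ p : SIdx n T, δ p = δ' (p.1.castSucc, p.2)) :
    costJ n m T A B Q R (fun q => u' (q.1.castSucc, q.2)) δ ≤
    costJ n m (T+1) A B Q R u' δ' := by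
  set u : UIdx m T → ℝ := fun q => u' (q.1.castSucc, q.2) with hu
  rw [costJ_eq, costJ_eq, qform_bigQ, qform_bigQ, qform_bigR, qform_bigR]
  set x := xvec n m T A B u δ
  set x' := xvec n m (T+1) A B u' δ'
  have hagree : ∀ (k : Fin (T+1)) (i : Fin n), x (k, i) = x' (k.castSucc, i) :=
    xvec_agree A B u' δ' δ hδ
  have hQsum : ∑ k : Fin T, (fun i => x (k.castSucc, i)) ⬝ᵥ (Q *ᵥ fun i => x (k.castSucc, i)) ≤
      ∑ k : Fin (T+1), (fun i => x' (k.castSucc, i)) ⬝ᵥ (Q *ᵥ fun i => x' (k.castSucc, i)) := by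
    rw [Fin.sum_univ_castSucc (n := T)]
    have h1 : ∑ k : Fin T, (fun i => x (k.castSucc, i)) ⬝ᵥ (Q *ᵥ fun i => x (k.castSucc, i)) =
        ∑ k : Fin T, (fun i => x' (k.castSucc.castSucc, i)) ⬝ᵥ
          (Q *ᵥ fun i => x' (k.castSucc.castSucc, i)) := by
      apply Finset.sum_congr rfl
      intro k _
      have heq : (fun i => x (k.castSucc, i)) = (fun i => x' (k.castSucc.castSucc, i)) :=
        funext fun i => hagree k.castSucc i
      rw [heq]
    rw [h1]
    apply le_add_of_nonneg_right
    simpa using hQ.dotProduct_mulVec_nonneg (fun i => x' ((Fin.last T).castSucc, i))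
  have hRsum : ∑ k : Fin T, (fun i => u (k, i)) ⬝ᵥ (R *ᵥ fun i => u (k, i)) ≤
      ∑ k : Fin (T+1), (fun i => u' (k, i)) ⬝ᵥ (R *ᵥ fun i => u' (k, i)) := by
    rw [Fin.sum_univ_castSucc (n := T)]
    have h1 : ∑ k : Fin T, (fun i => u (k, i)) ⬝ᵥ (R *ᵥ fun i => u (k, i)) =
        ∑ k : Fin T, (fun i => u' (k.castSucc, i)) ⬝ᵥ (R *ᵥ fun i => u' (k.castSucc, i)) := rfl
    rw [h1]
    apply le_add_of_nonneg_right
    simpa using hR.posSemidef.dotProduct_mulVec_nonneg (fun i => u' (Fin.last T, i))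
  exact add_le_add hQsum hRsum

lemma dot_shift {a b : Type*} [Fintype a] [Fintype b] (M : Matrix a b ℝ) (v : a → ℝ) (w : b → ℝ) :
    (Mᵀ *ᵥ v) ⬝ᵥ w = v ⬝ᵥ (M *ᵥ w) := by
  rw [mulVec_transpose, ← dotProduct_mulVec]

lemma dot_shift' {a b : Type*} [Fintype a] [Fintype b] (M : Matrix a b ℝ) (v : b → ℝ) (w : a → ℝ) :
    (M *ᵥ v) ⬝ᵥ w = v ⬝ᵥ (Mᵀ *ᵥ w) := by
  have := dot_shift Mᵀ v w
  rwa [transpose_transpose] at this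

lemma bigP_posDef (Q : Matrix (Fin n) (Fin n) ℝ) (R : Matrix (Fin m) (Fin m) ℝ)
    (hQ : Q.PosSemidef) (hR : R.PosDef) : (bigP n m L A B Q R).PosDef := by
  apply (bigR_posDef R hR).add_posSemidef
  have h := (bigQ_posSemidef Q hQ).conjTranspose_mul_mul_same (bigF n m L A B)
  simpa [conjTranspose_eq_transpose_of_trivial] using h

lemma transpose_eq_conjTranspose {a b : Type*} (M : Matrix a b ℝ) : Mᵀ = Mᴴ := by
  ext i j; simp [conjTranspose_apply]

lemma bigP_symm (Q : Matrix (Fin n) (Fin n) ℝ) (R : Matrix (Fin m) (Fin m) ℝ)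
    (hQ : Q.PosSemidef) (hR : R.PosDef) : (bigP n m L A B Q R)ᵀ = bigP n m L A B Q R := by
  rw [transpose_eq_conjTranspose]
  exact (bigP_posDef A B Q R hQ hR).isHermitian

lemma bigQ_symm (Q : Matrix (Fin n) (Fin n) ℝ) (hQ : Q.PosSemidef) :
    (bigQ n L Q)ᵀ = bigQ n L Q := by
  rw [transpose_eq_conjTranspose]
  exact (bigQ_posSemidef Q hQ).isHermitian

lemma push_through (Q : Matrix (Fin n) (Fin n) ℝ) (R : Matrix (Fin m) (Fin m) ℝ)
    (hQ : Q.PosSemidef) (hR : R.PosDef) :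
    (1 + bigF n m L A B * (bigR m L R)⁻¹ * (bigF n m L A B)ᵀ * bigQ n L Q) *
      (1 - bigF n m L A B * ((bigP n m L A B Q R)⁻¹ * ((bigF n m L A B)ᵀ * bigQ n L Q))) = 1 := by
  set F := bigF n m L A B
  set Qb := bigQ n L Q
  set Rb := bigR m L R
  set P := bigP n m L A B Q R with hPdef
  have hRu : IsUnit Rb.det := (Matrix.isUnit_iff_isUnit_det _).mp (bigR_posDef R hR).isUnit
  have hPu : IsUnit P.det := (Matrix.isUnit_iff_isUnit_det _).mp (bigP_posDef A B Q R hQ hR).isUnit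
  have hRinv : Rb⁻¹ * Rb = 1 := Matrix.nonsing_inv_mul _ hRu
  have hPinv : P * P⁻¹ = 1 := Matrix.mul_nonsing_inv _ hPu
  have key : Rb⁻¹ - Rb⁻¹ * ((Fᵀ * Qb) * F) * P⁻¹ = P⁻¹ := by
    have h1 : Rb⁻¹ - Rb⁻¹ * ((Fᵀ * Qb) * F) * P⁻¹ = Rb⁻¹ * (P - (Fᵀ * Qb) * F) * P⁻¹ := by
      rw [Matrix.mul_sub, Matrix.sub_mul, Matrix.mul_assoc Rb⁻¹ P P⁻¹, hPinv, Matrix.mul_one]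
    rw [h1]
    have h2 : P - (Fᵀ * Qb) * F = Rb := by
      rw [hPdef]; unfold bigP
      rw [Matrix.mul_assoc]
      abel
    rw [h2, hRinv, Matrix.one_mul]
  have expand : (1 + F * Rb⁻¹ * Fᵀ * Qb) * (1 - F * (P⁻¹ * (Fᵀ * Qb))) =
      1 + F * ((Rb⁻¹ - P⁻¹ - Rb⁻¹ * ((Fᵀ * Qb) * F) * P⁻¹) * (Fᵀ * Qb)) := by
    rw [Matrix.mul_sub, Matrix.mul_one, Matrix.add_mul, Matrix.one_mul]
    simp only [Matrix.sub_mul, Matrix.mul_sub, Matrix.mul_assoc]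
    abel
  rw [expand]
  have : Rb⁻¹ - P⁻¹ - Rb⁻¹ * ((Fᵀ * Qb) * F) * P⁻¹ = 0 := by
    rw [sub_sub, add_comm, ← sub_sub, key, sub_self]
  rw [this, Matrix.zero_mul, Matrix.mul_zero, add_zero]

lemma Cmat_eq (Q : Matrix (Fin n) (Fin n) ℝ) (R : Matrix (Fin m) (Fin m) ℝ)
    (hQ : Q.PosSemidef) (hR : R.PosDef) :
    Cmat n m L A B Q R =
      (bigG n L A)ᵀ * bigQ n L Q * bigG n L A -
      ((bigF n m L A B)ᵀ * bigQ n L Q * bigG n L A)ᵀ * (bigP n m L A B Q R)⁻¹ *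
        ((bigF n m L A B)ᵀ * bigQ n L Q * bigG n L A) := by
  set F := bigF n m L A B
  set Qb := bigQ n L Q
  set Rb := bigR m L R
  set G := bigG n L A
  set P := bigP n m L A B Q R
  have hinv : (1 + F * Rb⁻¹ * Fᵀ * Qb)⁻¹ = 1 - F * (P⁻¹ * (Fᵀ * Qb)) :=
    Matrix.inv_eq_right_inv (push_through A B Q R hQ hR)
  unfold Cmat
  rw [hinv]
  rw [transpose_mul, transpose_mul, transpose_transpose, bigQ_symm Q hQ]
  simp only [Matrix.mul_sub, Matrix.sub_mul, Matrix.mul_one, Matrix.mul_assoc]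
  rfl

lemma completion (Q : Matrix (Fin n) (Fin n) ℝ) (R : Matrix (Fin m) (Fin m) ℝ)
    (hQ : Q.PosSemidef) (hR : R.PosDef) (u : UIdx m L → ℝ) (δ : SIdx n L → ℝ) :
    costJ n m L A B Q R u δ =
      (u + (bigP n m L A B Q R)⁻¹ *ᵥ (((bigF n m L A B)ᵀ * bigQ n L Q * bigG n L A) *ᵥ δ)) ⬝ᵥ
        (bigP n m L A B Q R *ᵥ
          (u + (bigP n m L A B Q R)⁻¹ *ᵥ (((bigF n m L A B)ᵀ * bigQ n L Q * bigG n L A) *ᵥ δ))) +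
      δ ⬝ᵥ (Cmat n m L A B Q R *ᵥ δ) := by
  set F := bigF n m L A B
  set Qb := bigQ n L Q
  set Rb := bigR m L R
  set G := bigG n L A
  set P := bigP n m L A B Q R with hPdef
  have hPu : IsUnit P.det := (Matrix.isUnit_iff_isUnit_det _).mp (bigP_posDef A B Q R hQ hR).isUnit
  have hPinv : P * P⁻¹ = 1 := Matrix.mul_nonsing_inv _ hPu
  have hPinv' : P⁻¹ * P = 1 := Matrix.nonsing_inv_mul _ hPu
  have hPsymm : Pᵀ = P := bigP_symm A B Q R hQ hR
  have hPisymm : P⁻¹ᵀ = P⁻¹ := by rw [Matrix.transpose_nonsing_inv, hPsymm]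
  have hQsymm : Qbᵀ = Qb := bigQ_symm Q hQ
  set w := (Fᵀ * Qb * G) *ᵥ δ with hw
  set s := P⁻¹ *ᵥ w with hs
  rw [costJ_eq]
  set x := xvec n m L A B u δ with hx
  have hxe : x = F *ᵥ u + G *ᵥ δ := rfl
  have e1 : (F *ᵥ u) ⬝ᵥ (Qb *ᵥ (F *ᵥ u)) = u ⬝ᵥ ((Fᵀ * Qb * F) *ᵥ u) := by
    rw [dot_shift', mulVec_mulVec, mulVec_mulVec]
  have e2 : (F *ᵥ u) ⬝ᵥ (Qb *ᵥ (G *ᵥ δ)) = u ⬝ᵥ w := by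
    rw [dot_shift', mulVec_mulVec, mulVec_mulVec, hw]
  have e3 : (G *ᵥ δ) ⬝ᵥ (Qb *ᵥ (G *ᵥ δ)) = δ ⬝ᵥ ((Gᵀ * Qb * G) *ᵥ δ) := by
    rw [dot_shift', mulVec_mulVec, mulVec_mulVec]
  have lhs1 : x ⬝ᵥ (Qb *ᵥ x) =
      u ⬝ᵥ ((Fᵀ * Qb * F) *ᵥ u) + u ⬝ᵥ w + (G *ᵥ δ) ⬝ᵥ (Qb *ᵥ (F *ᵥ u)) + δ ⬝ᵥ ((Gᵀ * Qb * G) *ᵥ δ) := by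
    rw [hxe, add_dotProduct, mulVec_add, dotProduct_add, dotProduct_add, e1, e2, e3]
    ring
  have hPs : P *ᵥ s = w := by rw [hs, mulVec_mulVec, hPinv, one_mulVec]
  have rhs1 : (u + s) ⬝ᵥ (P *ᵥ (u + s)) =
      u ⬝ᵥ (P *ᵥ u) + u ⬝ᵥ w + s ⬝ᵥ (P *ᵥ u) + s ⬝ᵥ w := by
    rw [mulVec_add, add_dotProduct, dotProduct_add, dotProduct_add, hPs]
    ring
  have rhs2 : s ⬝ᵥ (P *ᵥ u) = (G *ᵥ δ) ⬝ᵥ (Qb *ᵥ (F *ᵥ u)) := by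
    have hL : s ⬝ᵥ (P *ᵥ u) = δ ⬝ᵥ ((Gᵀ * (Qb * F)) *ᵥ u) := by
      rw [hs, hw, dot_shift', hPisymm, mulVec_mulVec, hPinv', one_mulVec, dot_shift',
        transpose_mul, transpose_mul, transpose_transpose, hQsymm]
    have hR2 : (G *ᵥ δ) ⬝ᵥ (Qb *ᵥ (F *ᵥ u)) = δ ⬝ᵥ ((Gᵀ * (Qb * F)) *ᵥ u) := by
      rw [dot_shift', mulVec_mulVec, mulVec_mulVec, Matrix.mul_assoc]
    rw [hL, hR2]
  have rhs3 : s ⬝ᵥ w = δ ⬝ᵥ (((Fᵀ * Qb * G)ᵀ * (P⁻¹ * (Fᵀ * Qb * G))) *ᵥ δ) := by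
    rw [hs, hw, dot_shift', hPisymm, mulVec_mulVec, dot_shift', mulVec_mulVec]
  have rhs4 : u ⬝ᵥ (P *ᵥ u) = u ⬝ᵥ ((Fᵀ * Qb * F) *ᵥ u) + u ⬝ᵥ (Rb *ᵥ u) := by
    have hPexp : P = Rb + Fᵀ * Qb * F := rfl
    rw [hPexp, Matrix.add_mulVec, dotProduct_add]
    ring
  have hCm : Cmat n m L A B Q R = Gᵀ * Qb * G - (Fᵀ * Qb * G)ᵀ * P⁻¹ * (Fᵀ * Qb * G) :=
    Cmat_eq A B Q R hQ hR
  rw [lhs1, rhs1, rhs2, rhs3, rhs4, hCm]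
  rw [Matrix.sub_mulVec, dotProduct_sub,
    Matrix.mul_assoc ((Fᵀ * Qb * G)ᵀ) P⁻¹ (Fᵀ * Qb * G)]
  ring

lemma cost_ge (Q : Matrix (Fin n) (Fin n) ℝ) (R : Matrix (Fin m) (Fin m) ℝ)
    (hQ : Q.PosSemidef) (hR : R.PosDef) (u : UIdx m L → ℝ) (δ : SIdx n L → ℝ) :
    δ ⬝ᵥ (Cmat n m L A B Q R *ᵥ δ) ≤ costJ n m L A B Q R u δ := by
  rw [completion A B Q R hQ hR u δ]
  have := (bigP_posDef A B Q R hQ hR).posSemidef.dotProduct_mulVec_nonneg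
    (u + (bigP n m L A B Q R)⁻¹ *ᵥ (((bigF n m L A B)ᵀ * bigQ n L Q * bigG n L A) *ᵥ δ))
  simp only [star_trivial] at this
  linarith

lemma cost_opt (Q : Matrix (Fin n) (Fin n) ℝ) (R : Matrix (Fin m) (Fin m) ℝ)
    (hQ : Q.PosSemidef) (hR : R.PosDef) (δ : SIdx n L → ℝ) :
    costJ n m L A B Q R
      (-((bigP n m L A B Q R)⁻¹ *ᵥ (((bigF n m L A B)ᵀ * bigQ n L Q * bigG n L A) *ᵥ δ))) δ =
    δ ⬝ᵥ (Cmat n m L A B Q R *ᵥ δ) := by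
  rw [completion A B Q R hQ hR _ δ]
  simp

lemma Cmat_symm (Q : Matrix (Fin n) (Fin n) ℝ) (R : Matrix (Fin m) (Fin m) ℝ)
    (hQ : Q.PosSemidef) (hR : R.PosDef) :
    (Cmat n m L A B Q R)ᵀ = Cmat n m L A B Q R := by
  have hPu : IsUnit (bigP n m L A B Q R).det :=
    (Matrix.isUnit_iff_isUnit_det _).mp (bigP_posDef A B Q R hQ hR).isUnit
  have hPisymm : (bigP n m L A B Q R)⁻¹ᵀ = (bigP n m L A B Q R)⁻¹ := by
    rw [Matrix.transpose_nonsing_inv, bigP_symm A B Q R hQ hR]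
  rw [Cmat_eq A B Q R hQ hR]
  simp only [transpose_sub, transpose_mul, transpose_transpose, bigQ_symm Q hQ, hPisymm,
    Matrix.mul_assoc]

lemma dot_expand {a : Type*} [Fintype a] (M : Matrix a a ℝ) (v : a → ℝ) :
    v ⬝ᵥ (M *ᵥ v) = ∑ p, ∑ q, v p * M p q * v q := by
  simp [dotProduct, mulVec, Finset.mul_sum, mul_assoc]

lemma sum_split {N : ℕ} (h : Fin (N+1) × Fin n → ℝ) (h0 : ∀ i, h (0, i) = 0) :
    ∑ p : Fin (N+1) × Fin n, h p = ∑ k : Fin N, ∑ i, h (k.succ, i) := by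
  rw [Fintype.sum_prod_type, Fin.sum_univ_succ]
  simp [h0]

lemma sum_split' {N : ℕ} (h : Fin (N+1) × Fin n → ℝ) (hlast : ∀ i, h (Fin.last N, i) = 0) :
    ∑ p : Fin (N+1) × Fin n, h p = ∑ k : Fin N, ∑ i, h (k.castSucc, i) := by
  rw [Fintype.sum_prod_type, Fin.sum_univ_castSucc]
  simp [hlast]

lemma assemble_zero {N : ℕ} (x0 : Fin n → ℝ) (w : Fin N × Fin n → ℝ) (i : Fin n) :
    assemble n N x0 w ((0 : Fin (N+1)), i) = x0 i := by
  simp [assemble]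

lemma assemble_succ {N : ℕ} (x0 : Fin n → ℝ) (w : Fin N × Fin n → ℝ) (k : Fin N) (i : Fin n) :
    assemble n N x0 w (k.succ, i) = w (k, i) := by
  simp only [assemble, Fin.val_succ, Nat.add_sub_cancel, Nat.succ_ne_zero, dif_neg,
    not_false_iff]

lemma claimA {T : ℕ} (M : Matrix (SIdx n (T+1)) (SIdx n (T+1)) ℝ) (v : SIdx n T → ℝ) :
    v ⬝ᵥ ((M.submatrix (fun p : SIdx n T => ((p.1.succ : Fin (T + 2)), p.2))
        (fun p : SIdx n T => ((p.1.succ : Fin (T + 2)), p.2))) *ᵥ v) =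
    assemble n (T+1) (fun _ => 0) v ⬝ᵥ (M *ᵥ assemble n (T+1) (fun _ => 0) v) := by
  set δ' := assemble n (T+1) (fun _ => 0) v with hδ'
  have h0 : ∀ i, δ' ((0 : Fin (T+2)), i) = 0 := fun i => assemble_zero _ _ i
  have hS : ∀ (k : Fin (T+1)) (i : Fin n), δ' (k.succ, i) = v (k, i) :=
    fun k i => assemble_succ _ _ k i
  rw [dot_expand, dot_expand]
  rw [sum_split (fun p => ∑ q, δ' p * M p q * δ' q)
    (fun i => Finset.sum_eq_zero (fun q _ => by simp only [h0 i, zero_mul]))]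
  rw [Fintype.sum_prod_type]
  apply Finset.sum_congr rfl
  intro k _
  apply Finset.sum_congr rfl
  intro i _
  rw [sum_split (fun q => δ' (k.succ, i) * M (k.succ, i) q * δ' q)
    (fun j => by simp only [h0 j, mul_zero])]
  rw [Fintype.sum_prod_type]
  apply Finset.sum_congr rfl
  intro l _
  apply Finset.sum_congr rfl
  intro j _
  rw [hS k i, hS l j]
  rfl

lemma claimB {T : ℕ} (M : Matrix (SIdx n T) (SIdx n T) ℝ) (v : SIdx n T → ℝ) :
    v ⬝ᵥ ((Matrix.of fun p q : SIdx n T =>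
      if h : (p.1 : ℕ) < T ∧ (q.1 : ℕ) < T then
        M (⟨(p.1 : ℕ) + 1, by omega⟩, p.2) (⟨(q.1 : ℕ) + 1, by omega⟩, q.2)
      else 0) *ᵥ v) =
    assemble n T (fun _ => 0) (fun q => v (q.1.castSucc, q.2)) ⬝ᵥ
      (M *ᵥ assemble n T (fun _ => 0) (fun q => v (q.1.castSucc, q.2))) := by
  set δ := assemble n T (fun _ => 0) (fun q => v (q.1.castSucc, q.2)) with hδ
  have h0 : ∀ i, δ ((0 : Fin (T+1)), i) = 0 := fun i => assemble_zero _ _ i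
  have hS : ∀ (k : Fin T) (i : Fin n), δ (k.succ, i) = v (k.castSucc, i) :=
    fun k i => assemble_succ _ _ k i
  rw [dot_expand, dot_expand]
  rw [sum_split' (fun p => ∑ q, v p * (Matrix.of fun p q : SIdx n T => if h : (p.1 : ℕ) < T ∧ (q.1 : ℕ) < T then M (⟨(p.1 : ℕ) + 1, by omega⟩, p.2) (⟨(q.1 : ℕ) + 1, by omega⟩, q.2) else 0) p q * v q)
    (fun i => Finset.sum_eq_zero (fun q _ => by
      simp only [of_apply]
      rw [dif_neg (by simp [Fin.last]), mul_zero, zero_mul]))]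
  rw [sum_split (fun p => ∑ q, δ p * M p q * δ q)
    (fun i => Finset.sum_eq_zero (fun q _ => by simp only [h0 i, zero_mul]))]
  apply Finset.sum_congr rfl
  intro k _
  apply Finset.sum_congr rfl
  intro i _
  rw [sum_split' (fun q => v (k.castSucc, i) * (Matrix.of fun p' q : SIdx n T => if h : (p'.1 : ℕ) < T ∧ (q.1 : ℕ) < T then M (⟨(p'.1 : ℕ) + 1, by omega⟩, p'.2) (⟨(q.1 : ℕ) + 1, by omega⟩, q.2) else 0) (k.castSucc, i) q * v q)
    (fun j => by
      simp only [of_apply]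
      rw [dif_neg (by simp [Fin.last]), mul_zero, zero_mul])]
  rw [sum_split (fun q => δ (k.succ, i) * M (k.succ, i) q * δ q)
    (fun j => by simp only [h0 j, mul_zero])]
  apply Finset.sum_congr rfl
  intro l _
  apply Finset.sum_congr rfl
  intro j _
  rw [hS k i, hS l j, of_apply, dif_pos ⟨by simp, by simp⟩]
  congr 2

/-- Claim in the proof of Proposition 2: the clairvoyant baseline shift matrix
`Δ_i = 𝐂_{T+1}^{[1:T+1, 1:T+1]} − blkdiag(𝐂_T^{[1:T, 1:T]}, 0)` is positive semidefinite. -/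
theorem stmt12 (n m T : ℕ) (hn : 0 < n) (hm : 0 < m) (hT : 1 ≤ T)
    (A : Matrix (Fin n) (Fin n) ℝ) (B : Matrix (Fin n) (Fin m) ℝ)
    (Q : Matrix (Fin n) (Fin n) ℝ) (R : Matrix (Fin m) (Fin m) ℝ)
    (hQ : Q.PosSemidef) (hR : R.PosDef) :
    ∀ D : Matrix (SIdx n T) (SIdx n T) ℝ,
      (D = Matrix.of fun p q =>
        if h : (p.1 : ℕ) < T ∧ (q.1 : ℕ) < T then
          Cmat n m T A B Q R (⟨(p.1 : ℕ) + 1, by omega⟩, p.2) (⟨(q.1 : ℕ) + 1, by omega⟩, q.2)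
        else 0) →
      ((Cmat n m (T + 1) A B Q R).submatrix
          (fun p : SIdx n T => ((p.1.succ : Fin (T + 2)), p.2))
          (fun p : SIdx n T => ((p.1.succ : Fin (T + 2)), p.2)) - D).PosSemidef := by
  intro D hD
  subst hD
  refine posSemidef_iff_dotProduct_mulVec.mpr ⟨?_, ?_⟩
  · show _ᴴ = _
    rw [← transpose_eq_conjTranspose, transpose_sub, transpose_submatrix,
      Cmat_symm A B Q R hQ hR]
    congr 1
    ext p q
    rw [transpose_apply, of_apply, of_apply]
    by_cases h : (q.1 : ℕ) < T ∧ (p.1 : ℕ) < T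
    · rw [dif_pos h, dif_pos ⟨h.2, h.1⟩]
      have hsym := congrFun (congrFun (Cmat_symm A B Q R hQ hR (L := T))
        (⟨(p.1 : ℕ) + 1, by omega⟩, p.2)) (⟨(q.1 : ℕ) + 1, by omega⟩, q.2)
      rw [transpose_apply] at hsym
      exact hsym
    · rw [dif_neg h, dif_neg (fun hc => h ⟨hc.2, hc.1⟩)]
  · intro x
    rw [star_trivial, sub_mulVec, dotProduct_sub]
    rw [claimA (Cmat n m (T+1) A B Q R) x, claimB (Cmat n m T A B Q R) x]
    rw [sub_nonneg]
    set δ' := assemble n (T+1) (fun _ => 0) x with hδ'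
    set δ := assemble n T (fun _ => 0) (fun q => x (q.1.castSucc, q.2)) with hδ
    have hδrel : ∀ p : SIdx n T, δ p = δ' (p.1.castSucc, p.2) := by
      intro p
      obtain ⟨k, i⟩ := p
      rw [hδ, hδ']
      simp only [assemble, Fin.coe_castSucc]
      split_ifs with h
      · rfl
      · exact congrArg x (Prod.ext (Fin.ext (by simp)) rfl)
    set uopt := -((bigP n m (T+1) A B Q R)⁻¹ *ᵥ
      (((bigF n m (T+1) A B)ᵀ * bigQ n (T+1) Q * bigG n (T+1) A) *ᵥ δ')) with huopt
    have h1 : δ ⬝ᵥ (Cmat n m T A B Q R *ᵥ δ) ≤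
        costJ n m T A B Q R (fun q => uopt (q.1.castSucc, q.2)) δ :=
      cost_ge A B Q R hQ hR _ δ
    have h2 : costJ n m T A B Q R (fun q => uopt (q.1.castSucc, q.2)) δ ≤
        costJ n m (T+1) A B Q R uopt δ' :=
      cost_le_cost A B Q R hQ hR uopt δ' δ hδrel
    have h3 : costJ n m (T+1) A B Q R uopt δ' = δ' ⬝ᵥ (Cmat n m (T+1) A B Q R *ᵥ δ') :=
      cost_opt A B Q R hQ hR δ'
    linarith

end
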